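/- For all vectors x, y, z ∈ ℝᵈ with ‖z‖ = 1, ‖x‖ ≤ ‖y‖ ≤ 1, ‖y − z‖ ≤ 1/α₁, and ‖x − y‖ ≤ ‖y‖/α₂, where α₁ ≥ α₂ > 1, one has ‖x − z‖ ≤ (1/α₁)·√(1 − 1/(4α₂²)) + (1/α₂)·√(1 − 1/(4α₁²)). -/

import Mathlib

set_option maxHeartbeats 1000000 in
theorem stmt_7 (d : ℕ) (α₁ α₂ : ℝ) (h12 : α₂ ≤ α₁) (h2 : 1 < α₂)
    (x y z : EuclideanSpace ℝ (Fin d))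
    (hz : ‖z‖ = 1) (hxy : ‖x‖ ≤ ‖y‖) (hy : ‖y‖ ≤ 1)
    (hyz : ‖y - z‖ ≤ 1 / α₁) (hxy2 : ‖x - y‖ ≤ ‖y‖ / α₂) :
    ‖x - z‖ ≤ (1 / α₁) * Real.sqrt (1 - 1 / (4 * α₂ ^ 2)) +
      (1 / α₂) * Real.sqrt (1 - 1 / (4 * α₁ ^ 2)) := by
  have h1 : (1 : ℝ) < α₁ := lt_of_lt_of_le h2 h12
  have hα₁ : (0:ℝ) < α₁ := by linarith
  have hα₂ : (0:ℝ) < α₂ := by linarith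
  set p : ℝ := 1 / α₁ with hp_def
  set q : ℝ := 1 / α₂ with hq_def
  have hp : 0 < p := by rw [hp_def]; positivity
  have hq : 0 < q := by rw [hq_def]; positivity
  have hq1 : q < 1 := by rw [hq_def, div_lt_one hα₂]; exact h2
  have hpq : p ≤ q := by
    rw [hp_def, hq_def]; exact one_div_le_one_div_of_le hα₂ h12
  have hp1 : p < 1 := lt_of_le_of_lt hpq hq1
  set E : ℝ := Real.sqrt (1 - p ^ 2 / 4) with hE_def
  set F : ℝ := Real.sqrt (1 - q ^ 2 / 4) with hF_def
  have hE2 : E ^ 2 = 1 - p ^ 2 / 4 := Real.sq_sqrt (by nlinarith)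
  have hF2 : F ^ 2 = 1 - q ^ 2 / 4 := Real.sq_sqrt (by nlinarith)
  have hE : 0 < E := Real.sqrt_pos.2 (by nlinarith)
  have hF : 0 < F := Real.sqrt_pos.2 (by nlinarith)
  clear_value p q E F
  -- scalar abbreviations for the Gram matrix entries
  set X2 : ℝ := ‖x‖ ^ 2 with hX2
  set Y2 : ℝ := ‖y‖ ^ 2 with hY2
  set Z2 : ℝ := ‖z‖ ^ 2 with hZ2
  set XY : ℝ := (inner ℝ x y : ℝ) with hXY
  set YZ : ℝ := (inner ℝ y z : ℝ) with hYZ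
  set XZ : ℝ := (inner ℝ x z : ℝ) with hXZ
  clear_value X2 Y2 Z2 XY YZ XZ
  have hZ1 : Z2 = 1 := by rw [hZ2, hz]; norm_num
  have hs3 : X2 ≤ Y2 := by
    rw [hX2, hY2]; exact pow_le_pow_left₀ (norm_nonneg x) hxy 2
  have hs4 : Y2 ≤ 1 := by
    rw [hY2, sq]
    calc ‖y‖ * ‖y‖ ≤ 1 * 1 := mul_self_le_mul_self (norm_nonneg y) hy
      _ = 1 := one_mul 1
  have hdyz : ‖y - z‖ ^ 2 = Y2 - 2 * YZ + Z2 := by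
    rw [hY2, hYZ, hZ2]; exact norm_sub_sq_real y z
  have hdxy : ‖x - y‖ ^ 2 = X2 - 2 * XY + Y2 := by
    rw [hX2, hXY, hY2]; exact norm_sub_sq_real x y
  have hdxz : ‖x - z‖ ^ 2 = X2 - 2 * XZ + Z2 := by
    rw [hX2, hXZ, hZ2]; exact norm_sub_sq_real x z
  have hs1 : Y2 - 2 * YZ + Z2 ≤ p ^ 2 * Z2 := by
    have hsq : ‖y - z‖ ^ 2 ≤ p ^ 2 := by
      rw [sq, sq]; exact mul_self_le_mul_self (norm_nonneg _) hyz
    rw [hdyz] at hsq; rw [hZ1] at hsq ⊢ <;> linarith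
  have hs2 : X2 - 2 * XY + Y2 ≤ q ^ 2 * Y2 := by
    have hxyq : ‖x - y‖ ≤ q * ‖y‖ := by
      rw [hq_def]
      calc ‖x - y‖ ≤ ‖y‖ / α₂ := hxy2
        _ = 1 / α₂ * ‖y‖ := by ring
    have hsq : ‖x - y‖ ^ 2 ≤ q ^ 2 * ‖y‖ ^ 2 := by
      rw [sq]
      calc ‖x - y‖ * ‖x - y‖ ≤ (q * ‖y‖) * (q * ‖y‖) :=
            mul_self_le_mul_self (norm_nonneg _) hxyq
        _ = q ^ 2 * ‖y‖ ^ 2 := by ring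
    rw [hdxy] at hsq; rw [hY2]; linarith
  -- the SOS vector coefficient
  set S : ℝ := p * E * (1 - q ^ 2 / 2) + q * F * (1 - p ^ 2 / 2) with hS_def
  clear_value S
  have hexp : ∀ a b c : ℝ, ‖a • x + b • y + c • z‖ ^ 2 =
      a ^ 2 * X2 + b ^ 2 * Y2 + c ^ 2 * Z2 + 2 * a * b * XY + 2 * a * c * XZ + 2 * b * c * YZ := by
    intro a b c
    rw [hX2, hY2, hZ2, hXY, hXZ, hYZ]
    have hv := (real_inner_self_eq_norm_sq (a • x + b • y + c • z)).symm
    rw [hv]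
    simp only [inner_add_left, inner_add_right, real_inner_smul_left, real_inner_smul_right]
    rw [real_inner_self_eq_norm_sq x, real_inner_self_eq_norm_sq y, real_inner_self_eq_norm_sq z,
      real_inner_comm y x, real_inner_comm z x, real_inner_comm z y]
    ring
  have hW : 0 ≤ p ^ 2 * E ^ 2 * X2 + S ^ 2 * Y2 + q ^ 2 * F ^ 2 * Z2
      - 2 * (p * E) * S * XY + 2 * (p * E) * (q * F) * XZ - 2 * S * (q * F) * YZ := by
    have h0 := hexp (p * E) (-S) (q * F)
    have hn : (0:ℝ) ≤ ‖(p * E) • x + (-S) • y + (q * F) • z‖ ^ 2 := sq_nonneg _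
    rw [h0] at hn
    linarith [hn]
  -- positivity of the multipliers
  have hq2 : (0:ℝ) < 1 - q ^ 2 / 2 := by nlinarith only [hq, hq1]
  have hp2 : (0:ℝ) < 1 - p ^ 2 / 2 := by nlinarith only [hp, hp1]
  have hpos : 0 < p * q * E * F := mul_pos (mul_pos (mul_pos hp hq) hE) hF
  have hc1 : 0 ≤ p * q * E * F * (1 - q ^ 2 / 2) + q ^ 2 * F ^ 2 * (1 - p ^ 2 / 2) := by
    linarith only [mul_pos hpos hq2, mul_nonneg (mul_nonneg (sq_nonneg q) (sq_nonneg F)) hp2.le]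
  have hc2 : 0 ≤ p * q * E * F * (1 - p ^ 2 / 2) + p ^ 2 * E ^ 2 * (1 - q ^ 2 / 2) := by
    linarith only [mul_pos hpos hp2, mul_nonneg (mul_nonneg (sq_nonneg p) (sq_nonneg E)) hq2.le]
  have hc3 : 0 ≤ p ^ 2 / 2 * (p * q * E * F) + p ^ 2 * q ^ 2 * E ^ 2 / 2 :=
    add_nonneg (mul_nonneg (by positivity) hpos.le) (by positivity)
  have hc4 : 0 ≤ q ^ 2 / 2 * (p * q * E * F) + p ^ 2 * q ^ 2 * F ^ 2 / 2 :=
    add_nonneg (mul_nonneg (by positivity) hpos.le) (by positivity)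
  have hsl1 : 0 ≤ p ^ 2 * Z2 - (Y2 - 2 * YZ + Z2) := by linarith only [hs1]
  have hsl2 : 0 ≤ q ^ 2 * Y2 - (X2 - 2 * XY + Y2) := by linarith only [hs2]
  have hsl3 : 0 ≤ Y2 - X2 := by linarith only [hs3]
  have hsl4 : 0 ≤ Z2 - Y2 := by rw [hZ1]; linarith only [hs4]
  -- the master SDP-duality identity
  have key : p * q * E * F * ((p * F + q * E) ^ 2 * Z2 - (X2 - 2 * XZ + Z2)) =
      (p * q * E * F * (1 - q ^ 2 / 2) + q ^ 2 * F ^ 2 * (1 - p ^ 2 / 2)) *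
        (p ^ 2 * Z2 - (Y2 - 2 * YZ + Z2))
      + (p * q * E * F * (1 - p ^ 2 / 2) + p ^ 2 * E ^ 2 * (1 - q ^ 2 / 2)) *
        (q ^ 2 * Y2 - (X2 - 2 * XY + Y2))
      + (p ^ 2 / 2 * (p * q * E * F) + p ^ 2 * q ^ 2 * E ^ 2 / 2) * (Y2 - X2)
      + (q ^ 2 / 2 * (p * q * E * F) + p ^ 2 * q ^ 2 * F ^ 2 / 2) * (Z2 - Y2)
      + (p ^ 2 * E ^ 2 * X2 + S ^ 2 * Y2 + q ^ 2 * F ^ 2 * Z2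
         - 2 * (p * E) * S * XY + 2 * (p * E) * (q * F) * XZ - 2 * S * (q * F) * YZ) := by
    rw [hS_def]
    linear_combination (p * q ^ 3 * E * F * Z2 - p ^ 2 * q ^ 2 * Y2 + 2 * p ^ 2 * q ^ 2 * F ^ 2 * Z2
        + (1/4) * p ^ 2 * q ^ 4 * Y2) * hE2
      + (p ^ 2 * q ^ 2 * Y2 + p ^ 3 * q * E * F * Z2 - (1/4) * p ^ 4 * q ^ 2 * Y2) * hF2
  have hrhs : 0 ≤ p * q * E * F * ((p * F + q * E) ^ 2 * Z2 - (X2 - 2 * XZ + Z2)) := by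
    rw [key]
    exact add_nonneg (add_nonneg (add_nonneg (add_nonneg (mul_nonneg hc1 hsl1)
      (mul_nonneg hc2 hsl2)) (mul_nonneg hc3 hsl3)) (mul_nonneg hc4 hsl4)) hW
  have hM : 0 ≤ (p * F + q * E) ^ 2 * Z2 - (X2 - 2 * XZ + Z2) := by
    have h0 : p * q * E * F * 0 ≤ p * q * E * F *
        ((p * F + q * E) ^ 2 * Z2 - (X2 - 2 * XZ + Z2)) := by rw [mul_zero]; exact hrhs
    exact le_of_mul_le_mul_left h0 hpos
  rw [hZ1] at hM
  have hdist : ‖x - z‖ ^ 2 ≤ (p * F + q * E) ^ 2 := by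
    rw [hdxz, hZ1]; linarith only [hM]
  have hT : 0 ≤ p * F + q * E := add_nonneg (mul_nonneg hp.le hF.le) (mul_nonneg hq.le hE.le)
  have hfinal : ‖x - z‖ ≤ p * F + q * E := by
    calc ‖x - z‖ = Real.sqrt (‖x - z‖ ^ 2) := (Real.sqrt_sq (norm_nonneg _)).symm
      _ ≤ Real.sqrt ((p * F + q * E) ^ 2) := Real.sqrt_le_sqrt hdist
      _ = p * F + q * E := Real.sqrt_sq hT
  have e1 : Real.sqrt (1 - 1 / (4 * α₂ ^ 2)) = F := by
    rw [hF_def]; congr 1; rw [hq_def]; field_simp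
  have e2 : Real.sqrt (1 - 1 / (4 * α₁ ^ 2)) = E := by
    rw [hE_def]; congr 1; rw [hp_def]; field_simp
  rw [e1, e2]
  exact hfinal
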